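/- TVD property of the first-order relaxed scheme: let p : ℝ → ℝ be non-decreasing and Lipschitz with constant μ, h > 0, φ > 0, λ = Δt/h, and consider the scheme u_j^{n+1} = u_j^n + (λ/(4h))(p_{j+2} - p_j) - (λ/(4h))(p_j - p_{j-2}) + (λφ/2)(p_{j+1} - 2p_j + p_{j-1}) with p_j = p(u_j^n), applied to a sequence (u_j^n) with compact support (u_j^n = 0 for |j| large). If Δt ≤ 2h²/(μ(1 + 2hφ)), then the total variation Σ_j |u_j^{n+1} - u_{j-1}^{n+1}| ≤ Σ_j |u_j^n - u_{j-1}^n|. -/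

import Mathlib

private lemma summable_bdd (f : ℤ → ℝ) (M : ℤ) (hf : ∀ j : ℤ, M ≤ |j| → f j = 0) :
    Summable f := by
  apply summable_of_ne_finset_zero (s := Finset.Icc (-M) M)
  intro j hj
  simp only [Finset.mem_Icc] at hj
  apply hf
  simp only [Int.abs_eq_natAbs] at *
  omega

private lemma tsum_shift (k : ℤ) (f : ℤ → ℝ) : ∑' j : ℤ, f (j + k) = ∑' j, f j := by
  simpa using Equiv.tsum_eq (Equiv.addRight k) f

theorem stmt_9 (p : ℝ → ℝ) (hp : Monotone p)
    (μ : ℝ) (hμ : 0 < μ)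
    (hlip : ∀ a b : ℝ, |p a - p b| ≤ μ * |a - b|)
    (h Δt φ : ℝ) (hh : 0 < h) (hΔt : 0 < Δt) (hφ : 0 < φ)
    (hcfl : Δt ≤ 2 * h ^ 2 / (μ * (1 + 2 * h * φ)))
    (u unew : ℤ → ℝ)
    (hsupp : ∃ N : ℤ, ∀ j : ℤ, N ≤ |j| → u j = 0)
    (hscheme : ∀ j : ℤ, unew j =
      u j + ((Δt / h) / (4 * h)) * (p (u (j + 2)) - p (u j))
          - ((Δt / h) / (4 * h)) * (p (u j) - p (u (j - 2)))
          + ((Δt / h) * φ / 2) * (p (u (j + 1)) - 2 * p (u j) + p (u (j - 1)))) :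
    ∑' j : ℤ, |unew j - unew (j - 1)| ≤ ∑' j : ℤ, |u j - u (j - 1)| := by
  obtain ⟨N, hN⟩ := hsupp
  set c : ℝ := (Δt / h) / (4 * h) with hc
  set e : ℝ := (Δt / h) * φ / 2 with he
  have hc0 : 0 ≤ c := by positivity
  have he0 : 0 ≤ e := by positivity
  set v : ℤ → ℝ := fun j => u j - u (j - 1) with hv
  set Δ : ℤ → ℝ := fun j => if u j - u (j - 1) = 0 then 0
    else (p (u j) - p (u (j - 1))) / (u j - u (j - 1)) with hΔ
  have hΔeq : ∀ j : ℤ, p (u j) - p (u (j - 1)) = Δ j * v j := by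
    intro j
    by_cases hvj : u j - u (j - 1) = 0
    · have h2 : u j = u (j - 1) := by linarith
      simp [hΔ, hv, hvj, h2]
    · simp only [hΔ, hv, hvj, if_false]
      exact (div_mul_cancel₀ _ hvj).symm
  have hΔ0 : ∀ j : ℤ, 0 ≤ Δ j := by
    intro j
    by_cases hvj : u j - u (j - 1) = 0
    · simp [hΔ, hvj]
    · simp only [hΔ, hvj, if_false]
      rcases lt_or_gt_of_ne (sub_ne_zero.mp hvj) with h1 | h1
      · rw [div_nonneg_iff]
        right
        exact ⟨by linarith [hp (le_of_lt h1)], by linarith⟩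
      · exact div_nonneg (by linarith [hp (le_of_lt h1)]) (by linarith)
  have hΔμ : ∀ j : ℤ, Δ j ≤ μ := by
    intro j
    by_cases hvj : u j - u (j - 1) = 0
    · simp [hΔ, hvj]; linarith
    · have habs : |Δ j| ≤ μ := by
        simp only [hΔ, hvj, if_false, abs_div]
        rw [div_le_iff₀ (abs_pos.mpr hvj)]
        exact hlip (u j) (u (j - 1))
      exact (le_abs_self _).trans habs
  -- support bounds
  have hvsupp : ∀ j : ℤ, N + 1 ≤ |j| → v j = 0 := by
    intro j hj
    have h1 : u j = 0 := hN j (by simp only [Int.abs_eq_natAbs] at *; omega)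
    have h2 : u (j - 1) = 0 := hN (j - 1) (by simp only [Int.abs_eq_natAbs] at *; omega)
    simp [hv, h1, h2]
  have hwsupp : ∀ j : ℤ, N + 3 ≤ |j| → unew j - unew (j - 1) = 0 := by
    intro j hj
    have z : ∀ k : ℤ, N + 2 ≤ |k| → unew k = 0 := by
      intro k hk
      have h0 : u k = 0 := hN k (by simp only [Int.abs_eq_natAbs] at *; omega)
      have h1 : u (k + 2) = 0 := hN _ (by simp only [Int.abs_eq_natAbs] at *; omega)
      have h2 : u (k - 2) = 0 := hN _ (by simp only [Int.abs_eq_natAbs] at *; omega)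
      have h3 : u (k + 1) = 0 := hN _ (by simp only [Int.abs_eq_natAbs] at *; omega)
      have h4 : u (k - 1) = 0 := hN _ (by simp only [Int.abs_eq_natAbs] at *; omega)
      rw [hscheme k, h0, h1, h2, h3, h4]; ring
    rw [z j (by simp only [Int.abs_eq_natAbs] at *; omega),
        z (j - 1) (by simp only [Int.abs_eq_natAbs] at *; omega)]
    ring
  -- the scheme rewritten for differences
  have hw : ∀ j : ℤ, unew j - unew (j - 1) =
      (1 - 2 * (c + e) * Δ j) * v j + c * (Δ (j + 2) * v (j + 2))
        + c * (Δ (j - 2) * v (j - 2)) + e * (Δ (j + 1) * v (j + 1))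
        + e * (Δ (j - 1) * v (j - 1)) := by
    intro j
    have e1 := hscheme j
    have e2 := hscheme (j - 1)
    have r1 : j - 1 + 2 = j + 1 := by ring
    have r2 : j - 1 + 1 = j := by ring
    have r3 : j - 1 - 1 = j - 2 := by ring
    have r4 : j - 1 - 2 = j - 3 := by ring
    rw [r1, r2, r3, r4] at e2
    have d0 := hΔeq j
    have d1 := hΔeq (j + 1); rw [show j + 1 - 1 = j by ring] at d1
    have d2 := hΔeq (j + 2); rw [show j + 2 - 1 = j + 1 by ring] at d2
    have dm1 := hΔeq (j - 1); rw [show j - 1 - 1 = j - 2 by ring] at dm1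
    have dm2 := hΔeq (j - 2); rw [show j - 2 - 1 = j - 3 by ring] at dm2
    have hvj : v j = u j - u (j - 1) := rfl
    rw [e1, e2]
    linear_combination c * d2 + c * d1 - c * d1 - c * d0 - c * d0 - c * dm1 + c * dm1
      + c * dm2 + e * d1 - 2 * e * d0 + e * dm1 + hvj
  -- coefficient bound
  have hcfl2 : 2 * (c + e) * μ ≤ 1 := by
    have hpos : 0 < μ * (1 + 2 * h * φ) := by positivity
    rw [le_div_iff₀ hpos] at hcfl
    have hh2 : (0:ℝ) < h ^ 2 := by positivity
    have hne : h ≠ 0 := ne_of_gt hh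
    calc 2 * (c + e) * μ = (Δt * (μ * (1 + 2 * h * φ))) / (2 * h ^ 2) := by
          rw [hc, he]; field_simp; ring
      _ ≤ 1 := by rw [div_le_one (by positivity)]; linarith
  -- pointwise abs bound
  have habs : ∀ j : ℤ, |unew j - unew (j - 1)| ≤
      (1 - 2 * (c + e) * Δ j) * |v j| + c * (Δ (j + 2) * |v (j + 2)|)
        + c * (Δ (j - 2) * |v (j - 2)|) + e * (Δ (j + 1) * |v (j + 1)|)
        + e * (Δ (j - 1) * |v (j - 1)|) := by
    intro j
    rw [hw j]
    have h1 : 0 ≤ 1 - 2 * (c + e) * Δ j := by nlinarith [hΔ0 j, hΔμ j, hc0, he0, hΔμ j]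
    have key : ∀ a b c' d f : ℝ, |a + b + c' + d + f| ≤ |a| + |b| + |c'| + |d| + |f| := by
      intro a b c' d f
      have k1 := abs_add_le (a + b + c' + d) f
      have k2 := abs_add_le (a + b + c') d
      have k3 := abs_add_le (a + b) c'
      have k4 := abs_add_le a b
      linarith
    refine (key _ _ _ _ _).trans ?_
    rw [abs_mul, abs_mul, abs_mul, abs_mul, abs_mul, abs_mul, abs_mul, abs_mul, abs_mul,
        abs_of_nonneg h1, abs_of_nonneg hc0, abs_of_nonneg he0, abs_of_nonneg (hΔ0 (j+2)),
        abs_of_nonneg (hΔ0 (j-2)), abs_of_nonneg (hΔ0 (j+1)), abs_of_nonneg (hΔ0 (j-1))]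
  -- summability
  have SW : Summable (fun j : ℤ => |unew j - unew (j - 1)|) :=
    summable_bdd _ (N + 3) (fun j hj => by rw [hwsupp j hj, abs_zero])
  have SV : Summable (fun j : ℤ => |v j|) :=
    summable_bdd _ (N + 1) (fun j hj => by rw [hvsupp j hj, abs_zero])
  have ST : Summable (fun j : ℤ => Δ j * |v j|) :=
    summable_bdd _ (N + 1) (fun j hj => by rw [hvsupp j hj, abs_zero, mul_zero])
  have Sshift : ∀ k : ℤ, Summable (fun j : ℤ => Δ (j + k) * |v (j + k)|) := by
    intro k
    apply summable_bdd _ (N + 1 + |k|)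
    intro j hj
    rw [hvsupp (j + k) (by simp only [Int.abs_eq_natAbs] at *; omega), abs_zero, mul_zero]
  have SA : Summable (fun j : ℤ => (1 - 2 * (c + e) * Δ j) * |v j|) :=
    summable_bdd _ (N + 1) (fun j hj => by rw [hvsupp j hj, abs_zero, mul_zero])
  have SB := (Sshift 2).mul_left c
  have SC' : Summable (fun j : ℤ => c * (Δ (j - 2) * |v (j - 2)|)) := by
    have := (Sshift (-2)).mul_left c
    simpa [sub_eq_add_neg] using this
  have SD := (Sshift 1).mul_left e
  have SE' : Summable (fun j : ℤ => e * (Δ (j - 1) * |v (j - 1)|)) := by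
    have := (Sshift (-1)).mul_left e
    simpa [sub_eq_add_neg] using this
  -- tsum of shifted = T
  set T : ℝ := ∑' j : ℤ, Δ j * |v j| with hT
  have tshift : ∀ k : ℤ, ∑' j : ℤ, Δ (j + k) * |v (j + k)| = T :=
    fun k => tsum_shift k (fun j => Δ j * |v j|)
  calc ∑' j : ℤ, |unew j - unew (j - 1)|
      ≤ ∑' j : ℤ, ((1 - 2 * (c + e) * Δ j) * |v j| + c * (Δ (j + 2) * |v (j + 2)|)
        + c * (Δ (j - 2) * |v (j - 2)|) + e * (Δ (j + 1) * |v (j + 1)|)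
        + e * (Δ (j - 1) * |v (j - 1)|)) := by
        apply Summable.tsum_le_tsum habs SW
        exact ((((SA.add SB).add SC').add SD).add SE')
    _ = ∑' j : ℤ, |v j| := by
        rw [Summable.tsum_add (((SA.add SB).add SC').add SD) SE',
            Summable.tsum_add ((SA.add SB).add SC') SD,
            Summable.tsum_add (SA.add SB) SC',
            Summable.tsum_add SA SB]
        have eA : ∑' j : ℤ, (1 - 2 * (c + e) * Δ j) * |v j|
            = ∑' j : ℤ, |v j| - 2 * (c + e) * T := by
          have : (fun j : ℤ => (1 - 2 * (c + e) * Δ j) * |v j|)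
              = fun j : ℤ => |v j| - 2 * (c + e) * (Δ j * |v j|) := by
            funext j; ring
          rw [this, Summable.tsum_sub SV (ST.mul_left _), tsum_mul_left]
        have eB : ∑' j : ℤ, c * (Δ (j + 2) * |v (j + 2)|) = c * T := by
          rw [tsum_mul_left, tshift 2]
        have eC : ∑' j : ℤ, c * (Δ (j - 2) * |v (j - 2)|) = c * T := by
          rw [tsum_mul_left]
          have : ∑' j : ℤ, Δ (j - 2) * |v (j - 2)| = T := by
            have := tshift (-2)
            simpa [sub_eq_add_neg] using this
          rw [this]
        have eD : ∑' j : ℤ, e * (Δ (j + 1) * |v (j + 1)|) = e * T := by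
          rw [tsum_mul_left, tshift 1]
        have eE : ∑' j : ℤ, e * (Δ (j - 1) * |v (j - 1)|) = e * T := by
          rw [tsum_mul_left]
          have : ∑' j : ℤ, Δ (j - 1) * |v (j - 1)| = T := by
            have := tshift (-1)
            simpa [sub_eq_add_neg] using this
          rw [this]
        rw [eA, eB, eC, eD, eE]; ring
    _ = ∑' j : ℤ, |u j - u (j - 1)| := rfl
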